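/- arXiv:2208.06491 — 5 statements merged into one kernel-verified Lean document; each statement's English description precedes it below -/
import Mathlib

section
/- Let r > 0, let F be a finite-dimensional real normed vector space, let λ : C([-r,0],ℝ) → F be a continuous linear map (where C([-r,0],ℝ) carries the sup norm), and let ε > 0. Then there exists a continuously differentiable function ψ : ℝ → ℝ such that λ applied to the restriction of ψ to [-r,0] equals 0, ψ'(0) = 1, and |ψ(t)| < ε for all t ∈ [-r,0]. -/
noncomputable def restrC {E : Type*} [TopologicalSpace E] [Zero E] (r : ℝ) (φ : ℝ → E) :
    C(Set.Icc (-r) (0:ℝ), E) := by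
  classical exact
    if h : ContinuousOn φ (Set.Icc (-r) 0) then ⟨(Set.Icc (-r) 0).restrict φ, h.restrict⟩ else 0

lemma restrC_apply {r : ℝ} {φ : ℝ → ℝ} (h : ContinuousOn φ (Set.Icc (-r) 0))
    (x : Set.Icc (-r) (0:ℝ)) : restrC r φ x = φ x := by
  simp [restrC, dif_pos h, Set.restrict]

lemma restrC_norm_le {r B : ℝ} (hB : 0 ≤ B) {φ : ℝ → ℝ}
    (h : ContinuousOn φ (Set.Icc (-r) 0)) (hφ : ∀ t ∈ Set.Icc (-r) (0:ℝ), |φ t| ≤ B) :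
    ‖restrC r φ‖ ≤ B := by
  rw [ContinuousMap.norm_le _ hB]
  intro x
  rw [restrC_apply h]
  simpa using hφ x x.2

lemma phi_contDiff (a : ℝ) : ContDiff ℝ 1 (fun t => a * Real.sin (a⁻¹ * t)) :=
  contDiff_const.mul ((Real.contDiff_sin.of_le le_top).comp (contDiff_const.mul contDiff_id))

lemma phi_hasDerivAt {a : ℝ} (ha : a ≠ 0) :
    HasDerivAt (fun t => a * Real.sin (a⁻¹ * t)) 1 0 := by
  have h1 : HasDerivAt (fun t : ℝ => a⁻¹ * t) a⁻¹ 0 := by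
    simpa using (hasDerivAt_id (0:ℝ)).const_mul a⁻¹
  have h2 : HasDerivAt (fun t => Real.sin (a⁻¹ * t)) (Real.cos (a⁻¹ * 0) * a⁻¹) 0 :=
    (Real.hasDerivAt_sin _).comp 0 h1
  have h3 := h2.const_mul a
  simpa [mul_inv_cancel₀ ha] using h3

lemma phi_abs_le {a : ℝ} (ha : 0 ≤ a) (t : ℝ) : |a * Real.sin (a⁻¹ * t)| ≤ a := by
  rw [abs_mul, abs_of_nonneg ha]
  calc a * |Real.sin (a⁻¹ * t)| ≤ a * 1 :=
        mul_le_mul_of_nonneg_left (abs_le.mpr ⟨Real.neg_one_le_sin _, Real.sin_le_one _⟩) ha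
    _ = a := mul_one a

set_option maxHeartbeats 1000000 in
set_option synthInstance.maxHeartbeats 400000 in
/-- Lemma 2.1: given a continuous linear map `λ` from `C([-r,0],ℝ)` (sup norm) into a
finite-dimensional real normed space `F`, and `ε > 0`, there is a continuously differentiable
`ψ` with `λ(ψ|_{[-r,0]}) = 0`, `ψ'(0) = 1` and `|ψ(t)| < ε` on `[-r,0]`. -/
theorem stmt0 {F : Type*} [NormedAddCommGroup F] [NormedSpace ℝ F] [FiniteDimensional ℝ F]
    (r : ℝ) (hr : 0 < r)
    (lam : C(Set.Icc (-r) (0:ℝ), ℝ) →L[ℝ] F) (ε : ℝ) (hε : 0 < ε) :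
    ∃ ψ : ℝ → ℝ, ContDiff ℝ 1 ψ ∧ lam (restrC r ψ) = 0 ∧ deriv ψ 0 = 1 ∧
      ∀ t ∈ Set.Icc (-r) (0:ℝ), |ψ t| < ε := by
  classical
  -- the basic family of functions
  set a : ℕ → ℝ := fun n => ((n : ℝ) + 1)⁻¹ with ha_def
  have ha_pos : ∀ n, 0 < a n := fun n => by positivity
  set Φ : ℕ → ℝ → ℝ := fun n t => a n * Real.sin ((a n)⁻¹ * t) with hΦ_def
  have hΦcd : ∀ n, ContDiff ℝ 1 (Φ n) := fun n => phi_contDiff (a n)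
  have hΦc : ∀ n, ContinuousOn (Φ n) (Set.Icc (-r) 0) :=
    fun n => (hΦcd n).continuous.continuousOn
  have hΦd : ∀ n, HasDerivAt (Φ n) 1 0 := fun n => phi_hasDerivAt (ha_pos n).ne'
  set v : ℕ → F := fun n => lam (restrC r (Φ n)) with hv_def
  have hvnorm : ∀ n, ‖v n‖ ≤ ‖lam‖ * a n := by
    intro n
    calc ‖v n‖ ≤ ‖lam‖ * ‖restrC r (Φ n)‖ := lam.le_opNorm _
      _ ≤ ‖lam‖ * a n := by
          exact mul_le_mul_of_nonneg_left
            (restrC_norm_le (ha_pos n).le (hΦc n) (fun t _ => phi_abs_le (ha_pos n).le t))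
            (norm_nonneg lam)
  -- stabilization of spans
  set Gk : ℕ → Submodule ℝ F := fun k => Submodule.span ℝ (v '' Set.Iic k) with hGk_def
  have hGkmono : ∀ {j k : ℕ}, j ≤ k → Gk j ≤ Gk k := fun {j k} h =>
    Submodule.span_mono (Set.image_mono (Set.Iic_subset_Iic.mpr (Nat.cast_le.mpr h)))
  have hbdd : BddAbove (Set.range fun k => Module.finrank ℝ (Gk k)) :=
    ⟨Module.finrank ℝ F, by rintro x ⟨k, rfl⟩; exact Submodule.finrank_le _⟩
  obtain ⟨k0, hk0⟩ : ∃ k0, Module.finrank ℝ (Gk k0) =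
      sSup (Set.range fun k => Module.finrank ℝ (Gk k)) := by
    have := Nat.sSup_mem (s := Set.range fun k => Module.finrank ℝ (Gk k)) ⟨_, ⟨0, rfl⟩⟩ hbdd
    obtain ⟨k0, hk0⟩ := this
    exact ⟨k0, hk0⟩
  have hGstab : ∀ k, k0 ≤ k → Gk k = Gk k0 := by
    intro k hk
    refine (Submodule.eq_of_le_of_finrank_le (hGkmono hk) ?_).symm
    rw [hk0]
    exact le_csSup hbdd ⟨k, rfl⟩
  have hvG : ∀ n, v n ∈ Gk k0 := by
    intro n
    have h1 : v n ∈ Gk (max n k0) :=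
      Submodule.subset_span ⟨n, by simp [le_max_left], rfl⟩
    rwa [hGstab _ (le_max_right _ _)] at h1
  -- the finite spanning family
  have hset : v '' Set.Iic k0 = Set.range fun i : Fin (k0 + 1) => v (i : ℕ) := by
    ext x
    constructor
    · rintro ⟨n, hn, rfl⟩
      exact ⟨⟨n, Nat.lt_succ_of_le hn⟩, rfl⟩
    · rintro ⟨i, rfl⟩
      exact ⟨(i : ℕ), Nat.lt_succ_iff.mp i.2, rfl⟩
  have hGrange : Gk k0 = Submodule.span ℝ (Set.range fun i : Fin (k0 + 1) => v (i : ℕ)) := by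
    exact congrArg (Submodule.span ℝ) hset
  -- a linear right inverse
  let U : (Fin (k0 + 1) → ℝ) →ₗ[ℝ] F :=
    { toFun := fun c => ∑ i, c i • v (i : ℕ)
      map_add' := by intro x y; simp [add_smul, Finset.sum_add_distrib]
      map_smul' := by intro c x; simp [smul_smul, Finset.smul_sum] }
  have hUmem : ∀ c : Fin (k0 + 1) → ℝ, U c ∈ Gk k0 := by
    intro c
    show ∑ i, c i • v (i : ℕ) ∈ Gk k0
    exact Submodule.sum_mem _ fun i _ => Submodule.smul_mem _ _ (hvG i)
  let Ucr : (Fin (k0 + 1) → ℝ) →ₗ[ℝ] (Gk k0) := U.codRestrict (Gk k0) hUmem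
  have hUsurj : Function.Surjective Ucr := by
    rintro ⟨g, hg⟩
    rw [hGrange] at hg
    obtain ⟨c, hc⟩ := Submodule.mem_span_range_iff_exists_fun ℝ |>.mp hg
    exact ⟨c, Subtype.ext hc⟩
  obtain ⟨σ, hσ⟩ := Ucr.exists_rightInverse_of_surjective (LinearMap.range_eq_top.mpr hUsurj)
  let σL := LinearMap.toContinuousLinearMap σ
  set C := ‖σL‖ with hC_def
  have hC0 : 0 ≤ C := norm_nonneg σL
  set K : ℝ := (k0 + 1 : ℕ) * (C * ‖lam‖) with hK_def
  have hK0 : 0 ≤ K := by positivity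
  -- choose n small
  set δ : ℝ := min ((2 * (K + 1))⁻¹) (ε / (4 * (K + 1))) with hδ_def
  have hδ0 : 0 < δ := lt_min (by positivity) (by positivity)
  obtain ⟨n, hn⟩ := exists_nat_one_div_lt (K := ℝ) hδ0
  have han : a n < δ := by
    rw [ha_def]
    simpa [one_div] using hn
  -- coefficients
  set t : Fin (k0 + 1) → ℝ := σ ⟨v n, hvG n⟩ with ht_def
  have hUt : ∑ i, t i • v (i : ℕ) = v n := by
    have h1 : Ucr (σ ⟨v n, hvG n⟩) = ⟨v n, hvG n⟩ := by
      rw [← LinearMap.comp_apply, hσ, LinearMap.id_apply]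
    have h2 := congrArg Subtype.val h1
    exact h2
  have hti : ∀ i, |t i| ≤ C * (‖lam‖ * a n) := by
    intro i
    have h1 : ‖t i‖ ≤ ‖t‖ := norm_le_pi_norm t i
    have h2 : ‖σL ⟨v n, hvG n⟩‖ ≤ C * ‖(⟨v n, hvG n⟩ : Gk k0)‖ := σL.le_opNorm _
    have h3 : ‖(⟨v n, hvG n⟩ : Gk k0)‖ = ‖v n‖ := rfl
    have h4 : (σL ⟨v n, hvG n⟩ : Fin (k0+1) → ℝ) = t := by
      rw [ht_def]; rfl
    rw [h4, h3] at h2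
    calc |t i| ≤ ‖t‖ := h1
      _ ≤ C * ‖v n‖ := h2
      _ ≤ C * (‖lam‖ * a n) := mul_le_mul_of_nonneg_left (hvnorm n) hC0
  set s : ℝ := ∑ i, t i with hs_def
  have hsum_abs : ∑ i : Fin (k0+1), |t i| ≤ K * a n := by
    calc ∑ i : Fin (k0+1), |t i| ≤ ∑ _i : Fin (k0+1), C * (‖lam‖ * a n) :=
          Finset.sum_le_sum fun i _ => hti i
      _ = (k0 + 1 : ℕ) * (C * (‖lam‖ * a n)) := by
          rw [Finset.sum_const, Finset.card_univ, Fintype.card_fin, nsmul_eq_mul]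
      _ = K * a n := by rw [hK_def]; ring
  have hs_abs : |s| ≤ K * a n := by
    calc |s| ≤ ∑ i : Fin (k0+1), |t i| := Finset.abs_sum_le_sum_abs _ _
      _ ≤ K * a n := hsum_abs
  have hKan : K * a n ≤ 1 / 2 := by
    have h1 : K * a n ≤ (K + 1) * δ := by
      have := mul_le_mul (le_add_of_nonneg_right zero_le_one) han.le (ha_pos n).le
        (by positivity : (0:ℝ) ≤ K + 1)
      linarith [this]
    have h2 : (K + 1) * δ ≤ (K + 1) * (2 * (K + 1))⁻¹ :=
      mul_le_mul_of_nonneg_left (min_le_left _ _) (by positivity)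
    have h3 : (K + 1) * (2 * (K + 1))⁻¹ = 1 / 2 := by
      field_simp
    linarith
  have h1s : (1 : ℝ) - s ≥ 1 / 2 := by
    have := abs_le.mp hs_abs
    linarith [hKan]
  have h1s0 : (1 : ℝ) - s ≠ 0 := by linarith
  have h1spos : (0:ℝ) < 1 - s := by linarith
  have hinv2 : (1 - s)⁻¹ ≤ 2 := by
    rw [show (2:ℝ) = (1/2 : ℝ)⁻¹ by norm_num]
    exact inv_anti₀ (by norm_num) h1s
  have hinvpos : 0 < (1 - s)⁻¹ := inv_pos.mpr h1spos
  -- the function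
  refine ⟨fun x => (1 - s)⁻¹ * (Φ n x - ∑ i : Fin (k0+1), t i * Φ (i : ℕ) x), ?_, ?_, ?_, ?_⟩
  · exact contDiff_const.mul ((hΦcd n).sub
      (ContDiff.sum fun i _ => contDiff_const.mul (hΦcd (i : ℕ))))
  · -- lam = 0
    have hψc : ContinuousOn
        (fun x => (1 - s)⁻¹ * (Φ n x - ∑ i : Fin (k0+1), t i * Φ (i : ℕ) x))
        (Set.Icc (-r) 0) := by
      apply Continuous.continuousOn
      exact continuous_const.mul ((hΦcd n).continuous.sub
        (continuous_finset_sum _ fun i _ => continuous_const.mul (hΦcd (i : ℕ)).continuous))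
    have key : restrC r (fun x => (1 - s)⁻¹ * (Φ n x - ∑ i : Fin (k0+1), t i * Φ (i : ℕ) x))
        = (1 - s)⁻¹ • (restrC r (Φ n) - ∑ i : Fin (k0+1), t i • restrC r (Φ (i : ℕ))) := by
      ext x
      rw [restrC_apply hψc]
      simp only [ContinuousMap.smul_apply, ContinuousMap.sub_apply, smul_eq_mul]
      rw [restrC_apply (hΦc n), ContinuousMap.sum_apply]
      congr 1
      congr 1
      exact Finset.sum_congr rfl fun i _ => by
        rw [ContinuousMap.smul_apply, restrC_apply (hΦc (i : ℕ)), smul_eq_mul]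
    rw [key, map_smul, map_sub, map_sum]
    simp only [map_smul]
    have : ∑ i : Fin (k0+1), t i • lam (restrC r (Φ (i : ℕ))) = v n := hUt
    rw [this]
    simp [hv_def]
  · -- derivative
    have hd : HasDerivAt
        (fun x => (1 - s)⁻¹ * (Φ n x - ∑ i : Fin (k0+1), t i * Φ (i : ℕ) x))
        ((1 - s)⁻¹ * ((1:ℝ) - ∑ i : Fin (k0+1), t i * 1)) 0 := by
      exact ((hΦd n).fun_sub (HasDerivAt.fun_sum fun (i : Fin (k0+1)) _ => (hΦd (i : ℕ)).const_mul (t i))).const_mul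
        ((1 - s)⁻¹)
    rw [hd.deriv]
    simp only [mul_one]
    rw [← hs_def]
    exact inv_mul_cancel₀ h1s0
  · -- bound
    intro x hx
    have hb1 : |Φ n x - ∑ i : Fin (k0+1), t i * Φ (i : ℕ) x| ≤ a n + K * a n := by
      have h1 : |Φ n x| ≤ a n := phi_abs_le (ha_pos n).le x
      have h2 : |∑ i : Fin (k0+1), t i * Φ (i : ℕ) x| ≤ K * a n := by
        calc |∑ i : Fin (k0+1), t i * Φ (i : ℕ) x| ≤ ∑ i : Fin (k0+1), |t i * Φ (i : ℕ) x| :=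
              Finset.abs_sum_le_sum_abs _ _
          _ ≤ ∑ i : Fin (k0+1), |t i| := by
              refine Finset.sum_le_sum fun i _ => ?_
              rw [abs_mul]
              have hΦle1 : |Φ (i : ℕ) x| ≤ 1 := by
                refine le_trans (phi_abs_le (ha_pos (i : ℕ)).le x) ?_
                rw [ha_def]
                simp only
                rw [inv_le_one_iff₀]
                right
                push_cast
                linarith [Nat.cast_nonneg (α := ℝ) (i : ℕ)]
              calc |t i| * |Φ (i:ℕ) x| ≤ |t i| * 1 :=
                    mul_le_mul_of_nonneg_left hΦle1 (abs_nonneg _)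
                _ = |t i| := mul_one _
          _ ≤ K * a n := hsum_abs
      calc |Φ n x - ∑ i : Fin (k0+1), t i * Φ (i : ℕ) x|
          ≤ |Φ n x| + |∑ i : Fin (k0+1), t i * Φ (i : ℕ) x| := abs_sub _ _
        _ ≤ a n + K * a n := add_le_add h1 h2
    rw [abs_mul, abs_of_pos hinvpos]
    have hfin : a n + K * a n ≤ (K + 1) * δ := by
      have h0 : a n + K * a n = (K + 1) * a n := by ring
      rw [h0]
      exact mul_le_mul_of_nonneg_left han.le (by positivity)
    have hδε : (K + 1) * δ ≤ ε / 4 := by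
      have := mul_le_mul_of_nonneg_left (min_le_right ((2 * (K + 1))⁻¹) (ε / (4 * (K + 1))))
        (by positivity : (0:ℝ) ≤ K + 1)
      calc (K + 1) * δ ≤ (K + 1) * (ε / (4 * (K + 1))) := this
        _ = ε / 4 := by field_simp
    calc (1 - s)⁻¹ * |Φ n x - ∑ i : Fin (k0+1), t i * Φ (i : ℕ) x|
        ≤ 2 * (ε / 4) := by
          apply mul_le_mul hinv2 (le_trans hb1 (le_trans hfin hδε)) (abs_nonneg _) (by norm_num)
      _ < ε := by linarith
end

section
/- Let F be a finite-dimensional real normed vector space, W ⊆ F a nonempty open set, N ≥ 1, V ⊆ ℝ^N a nonempty open set, and let R : W × V → ℝ^N be continuously differentiable with ‖D₂R(η,v)‖ ≤ 1/2 (operator norm of the partial Fréchet derivative in the second variable) for all (η,v) ∈ W × V. For η ∈ W define S_η : V → ℝ^N by S_η(v) = v - R(η,v). Then the set ⋃_{η∈W} {η} × S_η(V) = {(η,y) ∈ W × ℝ^N : ∃ v ∈ V, y = v - R(η,v)} is open in F × ℝ^N. -/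
/-- Proposition 3.2(i): with `‖D₂R(η,v)‖ ≤ 1/2` on `W × V`, the set
`⋃_{η ∈ W} {η} × S_η(V)`, where `S_η(v) = v - R(η,v)`, is open in `F × ℝ^N`. -/
theorem stmt7 {F : Type*} [NormedAddCommGroup F] [NormedSpace ℝ F] [FiniteDimensional ℝ F]
    (W : Set F) (hWopen : IsOpen W) (hWne : W.Nonempty)
    {N : ℕ} (hN : 1 ≤ N)
    (V : Set (EuclideanSpace ℝ (Fin N))) (hVopen : IsOpen V) (hVne : V.Nonempty)
    (R : F × EuclideanSpace ℝ (Fin N) → EuclideanSpace ℝ (Fin N))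
    (hR : ContDiffOn ℝ 1 R (W ×ˢ V))
    (hD2 : ∀ η ∈ W, ∀ v ∈ V, ‖fderiv ℝ (fun w => R (η, w)) v‖ ≤ 1 / 2) :
    IsOpen {p : F × EuclideanSpace ℝ (Fin N) |
      p.1 ∈ W ∧ ∃ v ∈ V, p.2 = v - R (p.1, v)} := by
  have hopen : IsOpen (W ×ˢ V) := hWopen.prod hVopen
  rw [Metric.isOpen_iff]
  rintro ⟨η₀, y₀⟩ ⟨hη₀, v₀, hv₀, hy₀⟩
  simp only at hη₀ hy₀
  -- a closed ball around v₀ inside V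
  obtain ⟨r, hr, hballV⟩ := Metric.isOpen_iff.1 hVopen v₀ hv₀
  set ρ : ℝ := r / 2 with hρdef
  have hρ : 0 < ρ := by positivity
  have hcb : Metric.closedBall v₀ ρ ⊆ V := fun x hx => hballV (by
    have : dist x v₀ ≤ ρ := hx
    simp only [Metric.mem_ball]
    linarith)
  -- continuity of η ↦ R (η, v₀) at η₀
  have hca : ContinuousAt R (η₀, v₀) :=
    hR.continuousOn.continuousAt (hopen.mem_nhds ⟨hη₀, hv₀⟩)
  have hφ : ContinuousAt (fun η => R (η, v₀)) η₀ :=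
    ContinuousAt.comp (f := fun η : F => (η, v₀)) hca (continuousAt_id.prodMk continuousAt_const)
  obtain ⟨δ₁, hδ₁, hcont⟩ := Metric.continuousAt_iff.1 hφ (ρ / 4) (by positivity)
  obtain ⟨δ₂, hδ₂, hballW⟩ := Metric.isOpen_iff.1 hWopen η₀ hη₀
  refine ⟨min (min δ₁ δ₂) (ρ / 4), by positivity, ?_⟩
  rintro ⟨η, y⟩ hp
  rw [Metric.mem_ball, Prod.dist_eq] at hp
  have hdη : dist η η₀ < min (min δ₁ δ₂) (ρ / 4) :=
    lt_of_le_of_lt (le_max_left _ _) hp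
  have hdy : dist y y₀ < ρ / 4 :=
    lt_of_lt_of_le (lt_of_le_of_lt (le_max_right _ _) hp) (min_le_right _ _)
  have hηW : η ∈ W := hballW (lt_of_lt_of_le hdη ((min_le_left _ _).trans (min_le_right _ _)))
  have hRcont : dist (R (η, v₀)) (R (η₀, v₀)) < ρ / 4 :=
    hcont (lt_of_lt_of_le hdη ((min_le_left _ _).trans (min_le_left _ _)))
  -- Lipschitz estimate for R (η, ·) on the closed ball
  have hdiff : ∀ v ∈ V, DifferentiableAt ℝ (fun w => R (η, w)) v := by
    intro v hv
    have h1 : DifferentiableAt ℝ R (η, v) :=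
      (hR.differentiableOn one_ne_zero).differentiableAt (hopen.mem_nhds ⟨hηW, hv⟩)
    exact h1.comp v (DifferentiableAt.prodMk (differentiableAt_const η) differentiableAt_id)
  have hlip : ∀ a ∈ Metric.closedBall v₀ ρ, ∀ b ∈ Metric.closedBall v₀ ρ,
      ‖R (η, a) - R (η, b)‖ ≤ 1 / 2 * ‖a - b‖ := by
    intro a ha b hb
    exact (convex_closedBall v₀ ρ).norm_image_sub_le_of_norm_fderiv_le
      (fun x hx => hdiff x (hcb hx)) (fun x hx => hD2 η hηW x (hcb hx)) hb ha
  -- the contraction g v = y + R (η, v) maps the ball into itself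
  set g : EuclideanSpace ℝ (Fin N) → EuclideanSpace ℝ (Fin N) := fun v => y + R (η, v) with hg
  have hmaps : Set.MapsTo g (Metric.closedBall v₀ ρ) (Metric.closedBall v₀ ρ) := by
    intro v hv
    have hv' : dist v v₀ ≤ ρ := hv
    have : g v - v₀ = (y - y₀) + (R (η, v) - R (η, v₀)) + (R (η, v₀) - R (η₀, v₀)) := by
      rw [hg, hy₀]; beta_reduce; abel
    have hb : ‖g v - v₀‖ ≤ ‖y - y₀‖ + ‖R (η, v) - R (η, v₀)‖ + ‖R (η, v₀) - R (η₀, v₀)‖ := by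
      rw [this]
      exact (norm_add_le _ _).trans (by gcongr; exact norm_add_le _ _)
    have h1 : ‖y - y₀‖ < ρ / 4 := by rw [← dist_eq_norm]; exact hdy
    have h2 : ‖R (η, v) - R (η, v₀)‖ ≤ 1 / 2 * ρ := by
      refine (hlip v hv v₀ (Metric.mem_closedBall_self hρ.le)).trans ?_
      have : ‖v - v₀‖ ≤ ρ := by rw [← dist_eq_norm]; exact hv'
      linarith
    have h3 : ‖R (η, v₀) - R (η₀, v₀)‖ < ρ / 4 := by rw [← dist_eq_norm]; exact hRcont
    have : dist (g v) v₀ ≤ ρ := by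
      rw [dist_eq_norm]; linarith
    exact this
  -- fixed point via the contraction mapping theorem
  have hgl : ∀ a ∈ Metric.closedBall v₀ ρ, ∀ b ∈ Metric.closedBall v₀ ρ,
      dist (g a) (g b) ≤ 1 / 2 * dist a b := by
    intro a ha b hb
    simp only [hg, dist_eq_norm, add_sub_add_left_eq_sub]
    exact hlip a ha b hb
  haveI : Nonempty (Metric.closedBall v₀ ρ) := ⟨⟨v₀, Metric.mem_closedBall_self hρ.le⟩⟩
  haveI : CompleteSpace (Metric.closedBall v₀ ρ) :=
    (Metric.isClosed_closedBall).isComplete.completeSpace_coe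
  set G : Metric.closedBall v₀ ρ → Metric.closedBall v₀ ρ :=
    fun x => ⟨g x.1, hmaps x.2⟩ with hG
  have hC : ContractingWith (1/2 : NNReal) G := by
    constructor
    · exact_mod_cast (by norm_num : (((1:NNReal)/2 : NNReal) : ℝ) < 1)
    · refine LipschitzWith.of_dist_le_mul fun a b => ?_
      have := hgl a a.2 b b.2
      simpa [hG, Subtype.dist_eq] using this
  set x := hC.fixedPoint G with hx
  have hfix : G x = x := hC.fixedPoint_isFixedPt
  have hxV : (x : EuclideanSpace ℝ (Fin N)) ∈ V := hcb x.2
  refine ⟨hηW, x, hxV, ?_⟩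
  have hgx : y + R (η, (x : EuclideanSpace ℝ (Fin N))) = ↑x := congrArg Subtype.val hfix
  show y = (x : EuclideanSpace ℝ (Fin N)) - R (η, ↑x)
  exact eq_sub_iff_add_eq.mpr hgx
end

section
/- Let F be a finite-dimensional real normed vector space, W ⊆ F a nonempty open set, N ≥ 1, V ⊆ ℝ^N a nonempty open set, and let R : W × V → ℝ^N be continuously differentiable with ‖D₂R(η,v)‖ ≤ 1/2 for all (η,v) ∈ W × V. Assume in addition that either V = ℝ^N, or ‖R(η,v)‖ < dist(v, ℝ^N∖V)/2 for all (η,v) ∈ W × V. Then for every η ∈ W the map S_η : V → ℝ^N, S_η(v) = v - R(η,v), is injective. -/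
/-- Proposition 3.2(ii), injectivity: with `‖D₂R(η,v)‖ ≤ 1/2` on `W × V` and either
`V = ℝ^N` or `‖R(η,v)‖ < dist(v, ℝ^N ∖ V)/2` on `W × V`, each map
`S_η : V → ℝ^N`, `S_η(v) = v - R(η,v)`, is injective. -/
theorem stmt8 {F : Type*} [NormedAddCommGroup F] [NormedSpace ℝ F] [FiniteDimensional ℝ F]
    (W : Set F) (hWopen : IsOpen W) (hWne : W.Nonempty)
    {N : ℕ} (hN : 1 ≤ N)
    (V : Set (EuclideanSpace ℝ (Fin N))) (hVopen : IsOpen V) (hVne : V.Nonempty)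
    (R : F × EuclideanSpace ℝ (Fin N) → EuclideanSpace ℝ (Fin N))
    (hR : ContDiffOn ℝ 1 R (W ×ˢ V))
    (hD2 : ∀ η ∈ W, ∀ v ∈ V, ‖fderiv ℝ (fun w => R (η, w)) v‖ ≤ 1 / 2)
    (hsmall : V = Set.univ ∨ ∀ η ∈ W, ∀ v ∈ V, ‖R (η, v)‖ < Metric.infDist v Vᶜ / 2) :
    ∀ η ∈ W, Set.InjOn (fun v => v - R (η, v)) V := by
  intro η hη
  suffices H : ∀ v₁ ∈ V, ∀ v₂ ∈ V,
      Metric.infDist v₂ Vᶜ ≤ Metric.infDist v₁ Vᶜ →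
      v₁ - R (η, v₁) = v₂ - R (η, v₂) → v₁ = v₂ by
    intro v₁ hv₁ v₂ hv₂ heq
    simp only at heq
    rcases le_total (Metric.infDist v₂ Vᶜ) (Metric.infDist v₁ Vᶜ) with h | h
    · exact H v₁ hv₁ v₂ hv₂ h heq
    · exact (H v₂ hv₂ v₁ hv₁ h heq.symm).symm
  intro v₁ hv₁ v₂ hv₂ hle heq
  have hRe : v₁ - v₂ = R (η, v₁) - R (η, v₂) := by
    rw [sub_eq_sub_iff_sub_eq_sub] at heq; exact heq
  have hnorm : ‖v₁ - v₂‖ = ‖R (η, v₁) - R (η, v₂)‖ := by rw [hRe]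
  obtain ⟨s, hconv, hsV, h1, h2⟩ :
      ∃ s : Set (EuclideanSpace ℝ (Fin N)), Convex ℝ s ∧ s ⊆ V ∧ v₁ ∈ s ∧ v₂ ∈ s := by
    rcases hsmall with huniv | hb
    · exact ⟨Set.univ, convex_univ, huniv ▸ le_rfl, trivial, trivial⟩
    · have hb1 := hb η hη v₁ hv₁
      have hb2 := hb η hη v₂ hv₂
      refine ⟨Metric.ball v₁ (Metric.infDist v₁ Vᶜ), convex_ball _ _, ?_, ?_, ?_⟩
      · intro x hx
        by_contra hxV
        have : Metric.infDist v₁ Vᶜ ≤ dist v₁ x := Metric.infDist_le_dist_of_mem hxV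
        rw [Metric.mem_ball, dist_comm] at hx
        linarith
      · refine Metric.mem_ball_self ?_
        have := norm_nonneg (R (η, v₁)); linarith
      · rw [Metric.mem_ball]
        have htri : ‖R (η, v₁) - R (η, v₂)‖ ≤ ‖R (η, v₁)‖ + ‖R (η, v₂)‖ :=
          norm_sub_le _ _
        have : dist v₂ v₁ = ‖v₁ - v₂‖ := by rw [dist_eq_norm, norm_sub_rev]
        rw [this, hnorm]
        linarith
  have hdiff : ∀ x ∈ s, DifferentiableAt ℝ (fun w => R (η, w)) x := by
    intro x hx
    have hat : ContDiffAt ℝ 1 R (η, x) :=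
      hR.contDiffAt ((hWopen.prod hVopen).mem_nhds ⟨hη, hsV hx⟩)
    have : ContDiffAt ℝ 1 (fun w => R (η, w)) x :=
      hat.comp x (ContDiffAt.prodMk contDiffAt_const contDiffAt_id)
    exact this.differentiableAt one_ne_zero
  have hbound : ∀ x ∈ s, ‖fderiv ℝ (fun w => R (η, w)) x‖ ≤ 1 / 2 :=
    fun x hx => hD2 η hη x (hsV hx)
  have hm := hconv.norm_image_sub_le_of_norm_fderiv_le hdiff hbound h2 h1
  rw [← hnorm] at hm
  have h0 : ‖v₁ - v₂‖ = 0 := by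
    have := norm_nonneg (v₁ - v₂); linarith
  have := norm_eq_zero.mp h0
  exact sub_eq_zero.mp this
end

section
/- Let F be a finite-dimensional real normed vector space, W ⊆ F a nonempty open set, N ≥ 1, V ⊆ ℝ^N a nonempty open set, and let R : W × V → ℝ^N be continuously differentiable with ‖D₂R(η,v)‖ ≤ 1/2 for all (η,v) ∈ W × V. Assume either V = ℝ^N or ‖R(η,v)‖ < dist(v, ℝ^N∖V)/2 for all (η,v), so that each S_η : V → ℝ^N, S_η(v) = v - R(η,v), is injective. Then the map Ω → V, (η,y) ↦ S_η⁻¹(y), defined on the open set Ω = ⋃_{η∈W} {η} × S_η(V) ⊆ F × ℝ^N, is continuously differentiable. -/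
open Metric Set

/-- Uniqueness: for fixed `η ∈ W`, the map `v ↦ v - R(η,v)` is injective on `V`. -/
lemma stmt10_uniq {F : Type*} [NormedAddCommGroup F] [NormedSpace ℝ F]
    {W : Set F} (hWopen : IsOpen W)
    {N : ℕ} {V : Set (EuclideanSpace ℝ (Fin N))} (hVopen : IsOpen V)
    {R : F × EuclideanSpace ℝ (Fin N) → EuclideanSpace ℝ (Fin N)}
    (hR : ContDiffOn ℝ 1 R (W ×ˢ V))
    (hD2 : ∀ η ∈ W, ∀ v ∈ V, ‖fderiv ℝ (fun w => R (η, w)) v‖ ≤ 1 / 2)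
    (hsmall : V = Set.univ ∨ ∀ η ∈ W, ∀ v ∈ V, ‖R (η, v)‖ < Metric.infDist v Vᶜ / 2) :
    ∀ η ∈ W, ∀ v₁ ∈ V, ∀ v₂ ∈ V, v₁ - R (η, v₁) = v₂ - R (η, v₂) → v₁ = v₂ := by
  intro η hη v₁ hv₁ v₂ hv₂ heq
  have hsub : v₁ - v₂ = R (η, v₁) - R (η, v₂) := sub_eq_sub_iff_sub_eq_sub.mp heq
  have hdiff : ∀ w ∈ V, DifferentiableAt ℝ (fun w => R (η, w)) w := by
    intro w hw
    have h1 : DifferentiableAt ℝ R (η, w) :=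
      (hR.contDiffAt ((hWopen.prod hVopen).mem_nhds ⟨hη, hw⟩)).differentiableAt one_ne_zero
    exact h1.comp w (DifferentiableAt.prodMk (differentiableAt_const η) differentiableAt_id)
  have key : segment ℝ v₁ v₂ ⊆ V := by
    rcases hsmall with h | hb
    · rw [h]; exact subset_univ _
    · by_cases hc : Vᶜ = (∅ : Set (EuclideanSpace ℝ (Fin N)))
      · have : V = univ := by rwa [compl_empty_iff] at hc
        rw [this]; exact subset_univ _
      · set d₁ := infDist v₁ Vᶜ with hd₁
        set d₂ := infDist v₂ Vᶜ with hd₂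
        have hL : ‖v₁ - v₂‖ < (d₁ + d₂) / 2 := by
          have h1 := hb η hη v₁ hv₁
          have h2 := hb η hη v₂ hv₂
          have : ‖v₁ - v₂‖ ≤ ‖R (η, v₁)‖ + ‖R (η, v₂)‖ := by
            rw [hsub]; exact norm_sub_le _ _
          linarith
        have hd₁pos : 0 < d₁ := lt_of_le_of_lt (by positivity) (by linarith [hb η hη v₁ hv₁, norm_nonneg (R (η, v₁))] : ‖R (η, v₁)‖ * 0 < d₁)
        have hd₂pos : 0 < d₂ := lt_of_le_of_lt (by positivity) (by linarith [hb η hη v₂ hv₂, norm_nonneg (R (η, v₂))] : ‖R (η, v₂)‖ * 0 < d₂)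
        rintro w ⟨a, b, ha, hb', hab, rfl⟩
        have hw1 : ‖a • v₁ + b • v₂ - v₁‖ = b * ‖v₁ - v₂‖ := by
          have : a • v₁ + b • v₂ - v₁ = b • (v₂ - v₁) := by
            rw [smul_sub]
            have : a • v₁ = v₁ - b • v₁ := by
              rw [eq_sub_iff_add_eq, ← add_smul]
              rw [hab, one_smul]
            rw [this]; abel
          rw [this, norm_smul, Real.norm_of_nonneg hb', norm_sub_rev]
        have hw2 : ‖a • v₁ + b • v₂ - v₂‖ = a * ‖v₁ - v₂‖ := by
          have : a • v₁ + b • v₂ - v₂ = a • (v₁ - v₂) := by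
            rw [smul_sub]
            have : b • v₂ = v₂ - a • v₂ := by
              rw [eq_sub_iff_add_eq, ← add_smul, add_comm b a, hab, one_smul]
            rw [this]; abel
          rw [this, norm_smul, Real.norm_of_nonneg ha]
        have hi1 : d₁ - b * ‖v₁ - v₂‖ ≤ infDist (a • v₁ + b • v₂) Vᶜ := by
          have := infDist_le_infDist_add_dist (x := v₁) (y := a • v₁ + b • v₂) (s := Vᶜ)
          rw [dist_eq_norm, norm_sub_rev, hw1] at this
          linarith
        have hi2 : d₂ - a * ‖v₁ - v₂‖ ≤ infDist (a • v₁ + b • v₂) Vᶜ := by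
          have := infDist_le_infDist_add_dist (x := v₂) (y := a • v₁ + b • v₂) (s := Vᶜ)
          rw [dist_eq_norm, norm_sub_rev, hw2] at this
          linarith
        have hpos : 0 < infDist (a • v₁ + b • v₂) Vᶜ := by
          by_contra hle
          push_neg at hle
          nlinarith [norm_nonneg (v₁ - v₂)]
        by_contra hwV
        rw [infDist_zero_of_mem (by simpa using hwV)] at hpos
        exact lt_irrefl 0 hpos
  have hmvt : ‖R (η, v₁) - R (η, v₂)‖ ≤ 1 / 2 * ‖v₁ - v₂‖ :=
    (convex_segment v₁ v₂).norm_image_sub_le_of_norm_fderiv_le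
      (fun x hx => hdiff x (key hx)) (fun x hx => hD2 η hη x (key hx))
      (right_mem_segment ℝ v₁ v₂) (left_mem_segment ℝ v₁ v₂)
  have : ‖v₁ - v₂‖ ≤ 1 / 2 * ‖v₁ - v₂‖ := by
    calc ‖v₁ - v₂‖ = ‖R (η, v₁) - R (η, v₂)‖ := by rw [hsub]
      _ ≤ 1 / 2 * ‖v₁ - v₂‖ := hmvt
  have h0 : ‖v₁ - v₂‖ = 0 := by linarith [norm_nonneg (v₁ - v₂)]
  exact sub_eq_zero.mp (norm_eq_zero.mp h0)

/-- Proposition 3.2(iii): under the hypotheses guaranteeing injectivity of each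
`S_η(v) = v - R(η,v)`, the map `(η,y) ↦ S_η⁻¹(y)` on `Ω = ⋃_{η ∈ W} {η} × S_η(V)`
is continuously differentiable: there is a `C¹` map `Φ` on `Ω` with `Φ(η,y) ∈ V` and
`Φ(η,y) - R(η,Φ(η,y)) = y` for all `(η,y) ∈ Ω`. -/
theorem stmt10 {F : Type*} [NormedAddCommGroup F] [NormedSpace ℝ F] [FiniteDimensional ℝ F]
    (W : Set F) (hWopen : IsOpen W) (hWne : W.Nonempty)
    {N : ℕ} (hN : 1 ≤ N)
    (V : Set (EuclideanSpace ℝ (Fin N))) (hVopen : IsOpen V) (hVne : V.Nonempty)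
    (R : F × EuclideanSpace ℝ (Fin N) → EuclideanSpace ℝ (Fin N))
    (hR : ContDiffOn ℝ 1 R (W ×ˢ V))
    (hD2 : ∀ η ∈ W, ∀ v ∈ V, ‖fderiv ℝ (fun w => R (η, w)) v‖ ≤ 1 / 2)
    (hsmall : V = Set.univ ∨ ∀ η ∈ W, ∀ v ∈ V, ‖R (η, v)‖ < Metric.infDist v Vᶜ / 2) :
    ∃ Φ : F × EuclideanSpace ℝ (Fin N) → EuclideanSpace ℝ (Fin N),
      ContDiffOn ℝ 1 Φ {p : F × EuclideanSpace ℝ (Fin N) |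
        p.1 ∈ W ∧ ∃ v ∈ V, p.2 = v - R (p.1, v)} ∧
      ∀ p ∈ {p : F × EuclideanSpace ℝ (Fin N) | p.1 ∈ W ∧ ∃ v ∈ V, p.2 = v - R (p.1, v)},
        Φ p ∈ V ∧ Φ p - R (p.1, Φ p) = p.2 := by
  classical
  have uniq := stmt10_uniq hWopen hVopen hR hD2 hsmall
  set Φ : F × EuclideanSpace ℝ (Fin N) → EuclideanSpace ℝ (Fin N) := fun p => if h : p.1 ∈ W ∧ ∃ v ∈ V, p.2 = v - R (p.1, v)
    then h.2.choose else hVne.choose with hΦ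
  have hΦspec : ∀ p : F × EuclideanSpace ℝ (Fin N), (p.1 ∈ W ∧ ∃ v ∈ V, p.2 = v - R (p.1, v)) → Φ p ∈ V ∧ p.2 = Φ p - R (p.1, Φ p) := by
    intro p hp
    have hp' : p.1 ∈ W ∧ ∃ v ∈ V, p.2 = v - R (p.1, v) := hp
    have h1 : Φ p = hp'.2.choose := by simp only [hΦ, dif_pos hp']
    obtain ⟨hv, he⟩ := hp'.2.choose_spec
    rw [h1]; exact ⟨hv, he⟩
  refine ⟨Φ, ?_, fun p hp => ⟨(hΦspec p hp).1, ((hΦspec p hp).2).symm⟩⟩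
  intro p hp
  obtain ⟨hv₀, hy₀⟩ := hΦspec p hp
  set v₀ := Φ p
  set η₀ := p.1
  have hη₀ : η₀ ∈ W := hp.1
  -- the map T(η,v) = (η, v - R(η,v))
  set T : F × EuclideanSpace ℝ (Fin N) → F × EuclideanSpace ℝ (Fin N) := fun q => (q.1, q.2 - R q) with hT
  have hRd : ContDiffAt ℝ 1 R (η₀, v₀) :=
    hR.contDiffAt ((hWopen.prod hVopen).mem_nhds ⟨hη₀, hv₀⟩)
  have hTc : ContDiffAt ℝ 1 T (η₀, v₀) :=
    ContDiffAt.prodMk contDiffAt_fst (contDiffAt_snd.sub hRd)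
  -- the derivative of T and its invertibility
  set A : F × EuclideanSpace ℝ (Fin N) →L[ℝ] EuclideanSpace ℝ (Fin N) := fderiv ℝ R (η₀, v₀) with hA
  set L : F × EuclideanSpace ℝ (Fin N) →L[ℝ] F × EuclideanSpace ℝ (Fin N) :=
    (ContinuousLinearMap.fst ℝ F (EuclideanSpace ℝ (Fin N))).prod
      (ContinuousLinearMap.snd ℝ F (EuclideanSpace ℝ (Fin N)) - A) with hL
  have hRdd : HasFDerivAt R A (η₀, v₀) := (hRd.differentiableAt one_ne_zero).hasFDerivAt
  have hTd : HasFDerivAt T L (η₀, v₀) :=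
    HasFDerivAt.prodMk (hasFDerivAt_fst) ((hasFDerivAt_snd).sub hRdd)
  have hA2 : ∀ k : EuclideanSpace ℝ (Fin N), ‖A (0, k)‖ ≤ 1 / 2 * ‖k‖ := by
    intro k
    have hinc : HasFDerivAt (fun w : EuclideanSpace ℝ (Fin N) => (η₀, w)) (ContinuousLinearMap.inr ℝ F (EuclideanSpace ℝ (Fin N))) v₀ :=
      hasFDerivAt_prodMk_right η₀ v₀
    have hcomp : HasFDerivAt (fun w => R (η₀, w))
        (A.comp (ContinuousLinearMap.inr ℝ F (EuclideanSpace ℝ (Fin N)))) v₀ := hRdd.comp v₀ hinc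
    have hb : ‖A.comp (ContinuousLinearMap.inr ℝ F (EuclideanSpace ℝ (Fin N)))‖ ≤ 1 / 2 := by
      rw [← hcomp.fderiv]; exact hD2 η₀ hη₀ v₀ hv₀
    have := (A.comp (ContinuousLinearMap.inr ℝ F (EuclideanSpace ℝ (Fin N)))).le_of_opNorm_le hb k
    simpa using this
  have hLinj : Function.Injective L := by
    intro x y hxy
    have hz : L (x - y) = 0 := by rw [map_sub, hxy, sub_self]
    set z := x - y with hzdef
    have hz1 : z.1 = 0 := congrArg Prod.fst hz
    have hz2 : z.2 - A z = 0 := congrArg Prod.snd hz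
    have hze : z = (0, z.2) := Prod.ext hz1 rfl
    have h2 : z.2 = A (0, z.2) := by rw [← hze, ← sub_eq_zero]; exact hz2
    have hnorm : ‖z.2‖ ≤ 1 / 2 * ‖z.2‖ := by
      calc ‖z.2‖ = ‖A (0, z.2)‖ := by rw [← h2]
        _ ≤ 1 / 2 * ‖z.2‖ := hA2 z.2
    have hz2z : z.2 = 0 := norm_eq_zero.mp (by linarith [norm_nonneg z.2])
    have : z = 0 := Prod.ext hz1 hz2z
    exact sub_eq_zero.mp this
  have hLsurj : Function.Surjective L := LinearMap.injective_iff_surjective.mp hLinj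
  set Ls := (LinearEquiv.ofBijective
      (L : (F × EuclideanSpace ℝ (Fin N)) →ₗ[ℝ] (F × EuclideanSpace ℝ (Fin N)))
      ⟨hLinj, hLsurj⟩).toContinuousLinearEquiv with hLs
  have hLs_coe : (Ls : (F × EuclideanSpace ℝ (Fin N)) →L[ℝ] (F × EuclideanSpace ℝ (Fin N))) = L := by
    ext x <;> rfl
  have hTd' : HasFDerivAt T
      (Ls : (F × EuclideanSpace ℝ (Fin N)) →L[ℝ] (F × EuclideanSpace ℝ (Fin N))) (η₀, v₀) := by
    rw [hLs_coe]; exact hTd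
  -- local inverse
  have hn : (1 : WithTop ℕ∞) ≠ 0 := one_ne_zero
  set g : F × EuclideanSpace ℝ (Fin N) → F × EuclideanSpace ℝ (Fin N) := hTc.localInverse hTd' hn with hg
  have hS := hTc.hasStrictFDerivAt' hTd' hn
  have hTp : T (η₀, v₀) = p := by
    simp only [hT]
    exact Prod.ext rfl hy₀.symm
  have hgC : ContDiffAt ℝ 1 g p := by
    rw [← hTp]; exact hTc.to_localInverse hTd' hn
  have hgp : g p = (η₀, v₀) := by
    rw [← hTp]; exact hTc.localInverse_apply_image hTd' hn
  have hgcont : ContinuousAt g p := hgC.continuousAt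
  have hmemWV : ∀ᶠ q in nhds p, g q ∈ W ×ˢ V := by
    apply hgcont.eventually_mem
    rw [hgp]
    exact (hWopen.prod hVopen).mem_nhds ⟨hη₀, hv₀⟩
  have hright : ∀ᶠ q in nhds p, T (g q) = q := by
    have := hS.eventually_right_inverse
    rw [hTp] at this
    exact this
  have heq : Φ =ᶠ[nhds p] fun q => (g q).2 := by
    filter_upwards [hmemWV, hright] with q hq1 hq2
    have hgW : (g q).1 ∈ W := hq1.1
    have hgV : (g q).2 ∈ V := hq1.2
    have hpair : (g q).1 = q.1 ∧ (g q).2 - R (g q) = q.2 := by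
      have h := hq2
      rw [hT] at h
      exact Prod.ext_iff.mp h
    have hq1' : (g q).1 = q.1 := hpair.1
    have hq2' : (g q).2 - R (g q) = q.2 := hpair.2
    have hRg : R (g q) = R (q.1, (g q).2) := by rw [← hq1']
    have hqΩ : q.1 ∈ W ∧ ∃ v ∈ V, q.2 = v - R (q.1, v) := by
      refine ⟨hq1' ▸ hgW, (g q).2, hgV, ?_⟩
      rw [← hq2', hRg]
    obtain ⟨hΦV, hΦeq⟩ := hΦspec q hqΩ
    exact uniq q.1 hqΩ.1 (Φ q) hΦV ((g q).2) hgV (by rw [← hΦeq, ← hq2', hRg])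
  have : ContDiffAt ℝ 1 Φ p := by
    have h2 : ContDiffAt ℝ 1 (fun q => (g q).2) p := contDiffAt_snd.comp p hgC
    exact h2.congr_of_eventuallyEq heq
  exact this.contDiffWithinAt
end

section
/- Suppose for each ν ∈ {1,…,n} and each v ∈ V a continuously differentiable function H_ν(v) : [-r,0] → ℝ is given with L(H_ν(v)·e_ν) = 0 and (H_ν(v))'(0) = 1. Define S : W × V → ℝ^{nk} by S_{(κ-1)n+ν}(η,v) = v_{(κ-1)n+ν} - g_ν(v)·H_ν(v)(-d_κ(η)), and assume that for every η ∈ W the map S_η = S(η,·) : V → ℝ^{nk} is injective. Let 𝒰 = {φ : [-r,0] → ℝ^n C¹ : Lφ ∈ W, φ̂ ∈ V}, 𝒪 = {χ : [-r,0] → ℝ^n C¹ : Lχ ∈ W, χ̂ ∈ S_{Lχ}(V)}, X_f = {φ ∈ 𝒰 : φ'(0) = g(φ̂)}, and X₀ = {χ : [-r,0] → ℝ^n C¹ : χ'(0) = 0}. Define A on 𝒰 by (A(φ))_ν(t) = φ_ν(t) - g_ν(φ̂)·H_ν(φ̂)(t). Then A restricts to a bijection from X_f onto X₀ ∩ 𝒪,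 and A(φ) = φ for every φ ∈ X_f ∩ X₀. -/
lemma restrC_apply_s15 {E : Type*} [TopologicalSpace E] [Zero E] {r : ℝ} {f : ℝ → E}
    (hf : ContinuousOn f (Set.Icc (-r) 0)) (x : Set.Icc (-r) (0:ℝ)) :
    restrC r f x = f x := by
  simp only [restrC, dif_pos hf]; rfl

/-- Set-theoretic content of Theorem 3.5: with `L(H_ν(v)·e_ν) = 0`, `(H_ν(v))'(0) = 1`,
`S_η(v)_{(κ-1)n+ν} = v_{(κ-1)n+ν} - g_ν(v)·H_ν(v)(-d_κ(η))` injective on `V` for each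
`η ∈ W`, `𝒰 = {φ C¹ : Lφ ∈ W, φ̂ ∈ V}`, `𝒪 = {χ C¹ : Lχ ∈ W, χ̂ ∈ S_{Lχ}(V)}`,
`X_f = {φ ∈ 𝒰 : φ'(0) = g(φ̂)}`, `X₀ = {χ C¹ : χ'(0) = 0}`, and
`A(φ)_ν = φ_ν - g_ν(φ̂)·H_ν(φ̂)`, the map `A` restricts to a bijection from `X_f` onto
`X₀ ∩ 𝒪`, and `A(φ) = φ` for every `φ ∈ X_f ∩ X₀`.
Functions on `[-r,0]` are encoded via `C¹` functions on `ℝ`. -/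
theorem stmt15 (r : ℝ) (hr : 0 < r) (n k : ℕ) (hn : 0 < n) (hk : 0 < k)
    {F : Type*} [NormedAddCommGroup F] [NormedSpace ℝ F] [FiniteDimensional ℝ F]
    (L : C(Set.Icc (-r) (0:ℝ), Fin n → ℝ) →L[ℝ] F)
    (W : Set F) (hWopen : IsOpen W) (hWne : W.Nonempty)
    (d : Fin k → F → ℝ) (hd : ∀ κ, ContDiffOn ℝ 1 (d κ) W)
    (hdr : ∀ κ, ∀ η ∈ W, d κ η ∈ Set.Icc (0:ℝ) r)
    (V : Set (Fin k × Fin n → ℝ)) (hVopen : IsOpen V) (hVne : V.Nonempty)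
    (g : (Fin k × Fin n → ℝ) → Fin n → ℝ) (hg : ContDiffOn ℝ 1 g V)
    (H : Fin n → (Fin k × Fin n → ℝ) → ℝ → ℝ)
    (hH : ∀ ν, ∀ w ∈ V, ContDiff ℝ 1 (H ν w))
    (hH1 : ∀ ν, ∀ w ∈ V, deriv (H ν w) 0 = 1)
    (hHL : ∀ ν, ∀ w ∈ V, L (restrC r (fun t => Pi.single ν (H ν w t))) = 0)
    (S : F → (Fin k × Fin n → ℝ) → Fin k × Fin n → ℝ)
    (hS : S = fun η v i => v i - g v i.2 * H i.2 v (-(d i.1 η)))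
    (hSinj : ∀ η ∈ W, Set.InjOn (S η) V)
    (U : Set (ℝ → Fin n → ℝ))
    (hU : U = {φ | ContDiff ℝ 1 φ ∧ L (restrC r φ) ∈ W ∧
      (fun i : Fin k × Fin n => φ (-(d i.1 (L (restrC r φ)))) i.2) ∈ V})
    (O : Set (ℝ → Fin n → ℝ))
    (hO : O = {χ | ContDiff ℝ 1 χ ∧ L (restrC r χ) ∈ W ∧
      (fun i : Fin k × Fin n => χ (-(d i.1 (L (restrC r χ)))) i.2) ∈ S (L (restrC r χ)) '' V})
    (Xf : Set (ℝ → Fin n → ℝ))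
    (hXf : Xf = {φ ∈ U |
      deriv φ 0 = g (fun i : Fin k × Fin n => φ (-(d i.1 (L (restrC r φ)))) i.2)})
    (X0 : Set (ℝ → Fin n → ℝ))
    (hX0 : X0 = {χ | ContDiff ℝ 1 χ ∧ deriv χ 0 = 0})
    (A : (ℝ → Fin n → ℝ) → ℝ → Fin n → ℝ)
    (hA : A = fun φ t ν => φ t ν -
      g (fun i : Fin k × Fin n => φ (-(d i.1 (L (restrC r φ)))) i.2) ν *
        H ν (fun i : Fin k × Fin n => φ (-(d i.1 (L (restrC r φ)))) i.2) t) :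
    Set.BijOn A Xf (X0 ∩ O) ∧ ∀ φ ∈ Xf ∩ X0, A φ = φ := by
  classical
  subst hU hO hXf hX0
  -- step 1: structural lemma about subtracting corrections
  have key1 : ∀ φ : ℝ → Fin n → ℝ, ContDiff ℝ 1 φ → ∀ w ∈ V, ∀ gv : Fin n → ℝ,
      ContDiff ℝ 1 (fun t ν => φ t ν - gv ν * H ν w t) ∧
      L (restrC r (fun t ν => φ t ν - gv ν * H ν w t)) = L (restrC r φ) ∧
      deriv (fun t ν => φ t ν - gv ν * H ν w t) 0 = deriv φ 0 - gv := by
    intro φ hφ w hw gv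
    have hcd : ContDiff ℝ 1 (fun t ν => φ t ν - gv ν * H ν w t) :=
      contDiff_pi.2 fun ν => ((contDiff_pi.1 hφ) ν).sub (contDiff_const.mul (hH ν w hw))
    have hsingleC : ∀ ν : Fin n,
        Continuous (fun t => (Pi.single ν (H ν w t) : Fin n → ℝ)) := by
      intro ν
      refine continuous_pi fun μ => ?_
      simp only [Pi.single_apply]
      by_cases h : μ = ν
      · simpa [h] using (hH ν w hw).continuous
      · simpa [h] using continuous_const
    have e3 : ∀ (ν : Fin n) (x : Set.Icc (-r) (0:ℝ)),
        restrC r (fun t => (Pi.single ν (H ν w t) : Fin n → ℝ)) x = Pi.single ν (H ν w ↑x) :=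
      fun ν x => restrC_apply_s15 ((hsingleC ν).continuousOn) x
    have hrestr : restrC r (fun t ν => φ t ν - gv ν * H ν w t)
        = restrC r φ - ∑ ν : Fin n,
            gv ν • restrC r (fun t => (Pi.single ν (H ν w t) : Fin n → ℝ)) := by
      ext x μ
      simp only [ContinuousMap.sub_apply, ContinuousMap.sum_apply, ContinuousMap.smul_apply,
        restrC_apply_s15 hcd.continuous.continuousOn, restrC_apply_s15 hφ.continuous.continuousOn,
        e3, Pi.sub_apply, Pi.smul_apply, Finset.sum_apply, smul_eq_mul]
      simp [Pi.single_apply, mul_ite, Finset.sum_ite_eq]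
    have hL : L (restrC r (fun t ν => φ t ν - gv ν * H ν w t)) = L (restrC r φ) := by
      rw [hrestr, map_sub, map_sum]
      simp [hHL _ w hw]
    have hder : HasDerivAt (fun t ν => φ t ν - gv ν * H ν w t) (deriv φ 0 - gv) 0 := by
      rw [hasDerivAt_pi]
      intro ν
      have h1 : HasDerivAt (fun t => φ t ν) (deriv φ 0 ν) 0 :=
        hasDerivAt_pi.1 (hφ.differentiable one_ne_zero 0).hasDerivAt ν
      have h2 : HasDerivAt (H ν w) 1 0 := by
        have := ((hH ν w hw).differentiable one_ne_zero 0).hasDerivAt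
        rwa [hH1 ν w hw] at this
      have h3 : HasDerivAt (fun x => φ x ν - gv ν * H ν w x) (deriv φ 0 ν - gv ν * 1) 0 :=
        h1.sub (h2.const_mul (gv ν))
      simpa using h3
    exact ⟨hcd, hL, hder.deriv⟩
  -- step 2: properties of A φ for φ with φ̂ ∈ V
  have key2 : ∀ φ : ℝ → Fin n → ℝ, ContDiff ℝ 1 φ →
      (fun i : Fin k × Fin n => φ (-(d i.1 (L (restrC r φ)))) i.2) ∈ V →
      ContDiff ℝ 1 (A φ) ∧ L (restrC r (A φ)) = L (restrC r φ) ∧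
      deriv (A φ) 0 = deriv φ 0 -
        g (fun i : Fin k × Fin n => φ (-(d i.1 (L (restrC r φ)))) i.2) ∧
      (fun i : Fin k × Fin n => (A φ) (-(d i.1 (L (restrC r (A φ))))) i.2)
        = S (L (restrC r (A φ)))
            (fun i : Fin k × Fin n => φ (-(d i.1 (L (restrC r φ)))) i.2) := by
    intro φ hc hV
    have hAφ : A φ = fun t ν => φ t ν -
        g (fun i : Fin k × Fin n => φ (-(d i.1 (L (restrC r φ)))) i.2) ν *
          H ν (fun i : Fin k × Fin n => φ (-(d i.1 (L (restrC r φ)))) i.2) t := by rw [hA]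
    obtain ⟨h1, h2, h3⟩ := key1 φ hc _ hV
      (g (fun i : Fin k × Fin n => φ (-(d i.1 (L (restrC r φ)))) i.2))
    have h2' : L (restrC r (A φ)) = L (restrC r φ) := by rw [hAφ]; exact h2
    refine ⟨hAφ ▸ h1, h2', by rw [hAφ]; exact h3, ?_⟩
    funext i
    simp only [hS, hAφ, h2', h2]
  refine ⟨⟨?_, ?_, ?_⟩, ?_⟩
  · -- MapsTo
    intro φ hφ
    obtain ⟨⟨hc, hW, hV⟩, hder⟩ := hφ
    obtain ⟨h1, h2, h3, h4⟩ := key2 φ hc hV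
    refine ⟨⟨h1, by rw [h3, hder, sub_self]⟩, h1, by rw [h2]; exact hW, ?_⟩
    exact ⟨_, hV, h4.symm⟩
  · -- InjOn
    intro φ hφ ψ hψ heq
    obtain ⟨⟨hcφ, hWφ, hVφ⟩, hderφ⟩ := hφ
    obtain ⟨⟨hcψ, hWψ, hVψ⟩, hderψ⟩ := hψ
    obtain ⟨_, h2φ, _, h4φ⟩ := key2 φ hcφ hVφ
    obtain ⟨_, h2ψ, _, h4ψ⟩ := key2 ψ hcψ hVψ
    have hη : L (restrC r φ) = L (restrC r ψ) := by rw [← h2φ, ← h2ψ, heq]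
    have h5 : (fun i : Fin k × Fin n => (A φ) (-(d i.1 (L (restrC r (A φ))))) i.2)
        = (fun i : Fin k × Fin n => (A ψ) (-(d i.1 (L (restrC r (A ψ))))) i.2) := by
      rw [heq]
    have h6 := h4φ.symm.trans (h5.trans h4ψ)
    rw [h2φ, h2ψ, ← hη] at h6
    have hath := hSinj _ hWφ hVφ (hη ▸ hVψ) h6
    funext t ν
    have hpt : A φ t ν = A ψ t ν := by rw [heq]
    simp only [hA] at hpt
    rw [hath, hη] at hpt
    exact sub_left_inj.mp hpt
  · -- SurjOn
    intro χ hχ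
    obtain ⟨⟨hcχ, hdχ⟩, hcχ', hWχ, v, hv, hSv⟩ := hχ
    obtain ⟨hc', hL', hd'⟩ := key1 χ hcχ v hv (-(g v))
    have hhat : (fun i : Fin k × Fin n =>
        (fun t ν => χ t ν - (-(g v)) ν * H ν v t) (-(d i.1 (L (restrC r
          (fun t ν => χ t ν - (-(g v)) ν * H ν v t))))) i.2) = v := by
      funext i
      have hSvi := congrFun hSv i
      simp only [hS] at hSvi
      rw [hL']
      simp only [Pi.neg_apply, neg_mul, sub_neg_eq_add]
      rw [← hSvi]
      ring
    have hXfmem : (fun t ν => χ t ν - (-(g v)) ν * H ν v t) ∈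
        {φ ∈ {φ | ContDiff ℝ 1 φ ∧ L (restrC r φ) ∈ W ∧
          (fun i : Fin k × Fin n => φ (-(d i.1 (L (restrC r φ)))) i.2) ∈ V} |
          deriv φ 0 = g (fun i : Fin k × Fin n => φ (-(d i.1 (L (restrC r φ)))) i.2)} := by
      refine ⟨⟨hc', by rw [hL']; exact hWχ, by rw [hhat]; exact hv⟩, ?_⟩
      rw [hhat, hd', hdχ]
      simp
    refine ⟨_, hXfmem, ?_⟩
    funext t ν
    simp only [hA, hhat]
    simp only [Pi.neg_apply]
    ring
  · -- fixed points
    intro φ hφ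
    obtain ⟨⟨_, hder⟩, _, hd0⟩ := hφ
    have hg0 : g (fun i : Fin k × Fin n => φ (-(d i.1 (L (restrC r φ)))) i.2) = 0 :=
      hder.symm.trans hd0
    funext t ν
    simp only [hA, hg0, Pi.zero_apply, zero_mul, sub_zero]
end
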